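/- A function F : ℝ → ℝ is a primitive of the function x ↦ √(1 − x²) on the closed interval [−1, 1] if and only if there exists a constant c ∈ ℝ such that F(x) = arcsin(x)/2 + x·√(1 − x²)/2 + c for all x ∈ [−1, 1]. -/

import Mathlib

open Set Real Filter

noncomputable def Gf : ℝ → ℝ := fun x => Real.arcsin x / 2 + x * Real.sqrt (1 - x ^ 2) / 2

lemma Gf_hasDerivAt {x : ℝ} (hx : x ∈ Set.Ioo (-1 : ℝ) 1) :
    HasDerivAt Gf (Real.sqrt (1 - x ^ 2)) x := by
  have h1 : x ≠ -1 := ne_of_gt hx.1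
  have h2 : x ≠ 1 := ne_of_lt hx.2
  have hpos : (0 : ℝ) < 1 - x ^ 2 := by nlinarith [hx.1, hx.2]
  have hne : (1 - x ^ 2) ≠ 0 := ne_of_gt hpos
  have hsne : Real.sqrt (1 - x ^ 2) ≠ 0 := by positivity
  have ha : HasDerivAt Real.arcsin (1 / Real.sqrt (1 - x ^ 2)) x := Real.hasDerivAt_arcsin h1 h2
  have hs : HasDerivAt (fun y : ℝ => Real.sqrt (1 - y ^ 2)) (-(2 * x) / (2 * Real.sqrt (1 - x ^ 2))) x := by
    have hinner : HasDerivAt (fun y : ℝ => 1 - y ^ 2) (-(2 * x)) x := by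
      simpa using ((hasDerivAt_pow 2 x).const_sub 1)
    simpa [div_eq_mul_inv, mul_comm, Function.comp_def] using (Real.hasDerivAt_sqrt hne).comp x hinner
  have hprod := (hasDerivAt_id x).mul hs
  have hsum : HasDerivAt (fun y => Real.arcsin y / 2 + y * Real.sqrt (1 - y ^ 2) / 2) (1 / Real.sqrt (1 - x ^ 2) / 2 + (1 * Real.sqrt (1 - x ^ 2) + x * (-(2 * x) / (2 * Real.sqrt (1 - x ^ 2)))) / 2) x := (ha.div_const 2).add (hprod.div_const 2)
  convert hsum using 1
  · rfl
  have hsq : Real.sqrt (1 - x ^ 2) * Real.sqrt (1 - x ^ 2) = 1 - x ^ 2 :=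
    Real.mul_self_sqrt hpos.le
  field_simp
  ring_nf
  nlinarith [hsq, Real.sqrt_nonneg (1 - x ^ 2), sq_nonneg (Real.sqrt (1 - x ^ 2)), mul_nonneg (Real.sqrt_nonneg (1 - x ^ 2)) (Real.sqrt_nonneg (1 - x ^ 2))]

lemma Gf_cont : Continuous Gf := by
  have h1 : Continuous (fun y : ℝ => Real.sqrt (1 - y ^ 2)) :=
    Real.continuous_sqrt.comp (continuous_const.sub (continuous_pow 2))
  exact ((Real.continuous_arcsin.div_const 2).add ((continuous_id.mul h1).div_const 2))

lemma Gf_hasDerivWithinAt {x : ℝ} (hx : x ∈ Set.Icc (-1 : ℝ) 1) :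
    HasDerivWithinAt Gf (Real.sqrt (1 - x ^ 2)) (Set.Icc (-1 : ℝ) 1) x := by
  rcases eq_or_ne x 1 with rfl | h1
  · have key : HasDerivWithinAt Gf 0 (Set.Iic (1:ℝ)) 1 := by
      apply hasDerivWithinAt_Iic_of_tendsto_deriv (s := Set.Ioo (-1 : ℝ) 1)
      · exact fun y hy => (Gf_hasDerivAt hy).differentiableAt.differentiableWithinAt
      · exact Gf_cont.continuousWithinAt
      · exact Ioo_mem_nhdsLT_of_mem (by constructor <;> norm_num)
      · have h0 : Tendsto (fun y : ℝ => Real.sqrt (1 - y ^ 2)) (nhdsWithin 1 (Set.Iio 1)) (nhds 0) := by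
          have : Continuous (fun y : ℝ => Real.sqrt (1 - y ^ 2)) := by fun_prop
          simpa using (this.tendsto 1).mono_left nhdsWithin_le_nhds
        apply h0.congr'
        filter_upwards [Ioo_mem_nhdsLT_of_mem (show (1:ℝ) ∈ Set.Ioc (-1:ℝ) 1 by constructor <;> norm_num)] with y hy
        exact ((Gf_hasDerivAt hy).deriv).symm
    have : Real.sqrt (1 - (1:ℝ) ^ 2) = 0 := by norm_num
    rw [this]
    exact key.mono Set.Icc_subset_Iic_self
  rcases eq_or_ne x (-1) with rfl | h2
  · have key : HasDerivWithinAt Gf 0 (Set.Ici (-1:ℝ)) (-1) := by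
      apply hasDerivWithinAt_Ici_of_tendsto_deriv (s := Set.Ioo (-1 : ℝ) 1)
      · exact fun y hy => (Gf_hasDerivAt hy).differentiableAt.differentiableWithinAt
      · exact Gf_cont.continuousWithinAt
      · exact Ioo_mem_nhdsGT_of_mem (by constructor <;> norm_num)
      · have h0 : Tendsto (fun y : ℝ => Real.sqrt (1 - y ^ 2)) (nhdsWithin (-1) (Set.Ioi (-1:ℝ))) (nhds 0) := by
          have : Continuous (fun y : ℝ => Real.sqrt (1 - y ^ 2)) := by fun_prop
          simpa using (this.tendsto (-1)).mono_left nhdsWithin_le_nhds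
        apply h0.congr'
        filter_upwards [Ioo_mem_nhdsGT_of_mem (show (-1:ℝ) ∈ Set.Ico (-1:ℝ) 1 by constructor <;> norm_num)] with y hy
        exact ((Gf_hasDerivAt hy).deriv).symm
    have : Real.sqrt (1 - (-1:ℝ) ^ 2) = 0 := by norm_num
    rw [this]
    exact key.mono Set.Icc_subset_Ici_self
  · have hx' : x ∈ Set.Ioo (-1:ℝ) 1 := ⟨lt_of_le_of_ne hx.1 (Ne.symm h2), lt_of_le_of_ne hx.2 h1⟩
    exact (Gf_hasDerivAt hx').hasDerivWithinAt

theorem stmt13 (F : ℝ → ℝ) :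
    (∀ x ∈ Set.Icc (-1 : ℝ) 1,
        HasDerivWithinAt F (Real.sqrt (1 - x ^ 2)) (Set.Icc (-1 : ℝ) 1) x) ↔
      ∃ c : ℝ, ∀ x ∈ Set.Icc (-1 : ℝ) 1,
        F x = Real.arcsin x / 2 + x * Real.sqrt (1 - x ^ 2) / 2 + c := by
  constructor
  · intro h
    refine ⟨F 0 - Gf 0, fun x hx => ?_⟩
    have hH : ∀ y ∈ Set.Icc (-1 : ℝ) 1,
        HasDerivWithinAt (fun z => F z - Gf z) 0 (Set.Icc (-1 : ℝ) 1) y := by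
      intro y hy
      simpa using (show HasDerivWithinAt (fun z => F z - Gf z) (Real.sqrt (1 - y ^ 2) - Real.sqrt (1 - y ^ 2)) (Set.Icc (-1 : ℝ) 1) y from (h y hy).sub (Gf_hasDerivWithinAt hy))
    have h0 : (0:ℝ) ∈ Set.Icc (-1:ℝ) 1 := by constructor <;> norm_num
    have := Convex.norm_image_sub_le_of_norm_hasDerivWithin_le
      (f := fun z => F z - Gf z) (f' := fun _ => (0:ℝ)) (C := 0)
      (fun y hy => hH y hy) (fun y hy => by simp) (convex_Icc _ _) h0 hx
    have heq : F x - Gf x = F 0 - Gf 0 := by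
      have : ‖(F x - Gf x) - (F 0 - Gf 0)‖ ≤ 0 := by simpa using this
      have := norm_le_zero_iff.mp this
      linarith [sub_eq_zero.mp this]
    unfold Gf at heq ⊢
    linarith
  · rintro ⟨c, hc⟩ x hx
    have := (Gf_hasDerivWithinAt hx).add_const c
    apply this.congr
    · intro y hy; rw [hc y hy]; rfl
    · rw [hc x hx]; rfl
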